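/- For n ≥ 2, the number of non-adjacent subsets of Z/nZ is the nearest integer to φ^n, where φ = (1+√5)/2 is the golden ratio; equivalently, |s_n − φ^n| < 1/2 for n ≥ 2. -/

import Mathlib

/-- A subset `A` of `ZMod n` is non-adjacent if whenever `i ∈ A`,
neither `i + 1` nor `i - 1` (mod `n`) belongs to `A`. -/
def NonAdjacent {n : ℕ} (A : Finset (ZMod n)) : Prop :=
  ∀ i ∈ A, (i + 1) ∉ A ∧ (i - 1) ∉ A

/-- `s n` is the number of non-adjacent subsets of `ZMod n`. -/
noncomputable def numNonAdjacent (n : ℕ) : ℕ :=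
  Nat.card {A : Finset (ZMod n) // NonAdjacent A}

namespace NAProof

def Good : List Bool → Prop := List.Chain' (fun a b => ¬(a = true ∧ b = true))

theorem chain'_iff_get {α} {R : α → α → Prop} {l : List α} : List.Chain' R l ↔
    ∀ (i : ℕ) (h : i < l.length - 1), R (l.get ⟨i, by omega⟩) (l.get ⟨i + 1, by omega⟩) := by
  unfold List.Chain'
  rw [List.isChain_iff_getElem]
  constructor
  · intro h i hi; exact h i (by omega)
  · intro h i hi; exact h i (by omega)

lemma good_nil : Good [] := List.isChain_nil

lemma good_singleton (b : Bool) : Good [b] := List.isChain_singleton b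

lemma good_false_cons (l : List Bool) : Good (false :: l) ↔ Good l := by
  unfold Good
  unfold List.Chain'
  rw [List.isChain_cons]
  simp

lemma good_true_cons (l : List Bool) :
    Good (true :: l) ↔ (∀ y ∈ l.head?, y = false) ∧ Good l := by
  unfold Good
  unfold List.Chain'
  rw [List.isChain_cons]
  constructor
  · rintro ⟨h1, h2⟩
    exact ⟨fun y hy => by have := h1 y hy; cases y <;> simp_all, h2⟩
  · rintro ⟨h1, h2⟩
    exact ⟨fun y hy => by have := h1 y hy; simp_all, h2⟩

/-- good lists of given length -/
def FA : ℕ → Finset (List Bool)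
  | 0 => {[]}
  | 1 => {[false], [true]}
  | (m+2) => ((FA (m+1)).image (List.cons false)) ∪ ((FA m).image (fun l => true :: false :: l))

/-- good lists of given length not ending in `true` -/
def FB : ℕ → Finset (List Bool)
  | 0 => {[]}
  | 1 => {[false]}
  | (m+2) => ((FB (m+1)).image (List.cons false)) ∪ ((FB m).image (fun l => true :: false :: l))

lemma cons_false_inj : Function.Injective (List.cons false (α := Bool)) :=
  fun _ _ h => by simpa using h
lemma cons_tf_inj : Function.Injective (fun l : List Bool => true :: false :: l) :=
  fun _ _ h => by simpa using h

lemma card_union_images (s t : Finset (List Bool)) :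
    ((s.image (List.cons false)) ∪ (t.image (fun l => true :: false :: l))).card
      = s.card + t.card := by
  rw [Finset.card_union_of_disjoint, Finset.card_image_of_injective _ cons_false_inj,
    Finset.card_image_of_injective _ cons_tf_inj]
  rw [Finset.disjoint_left]
  rintro a ha hb
  simp only [Finset.mem_image] at ha hb
  obtain ⟨x, -, rfl⟩ := ha
  obtain ⟨y, -, h⟩ := hb
  simp at h

lemma card_FA : ∀ m, (FA m).card = Nat.fib (m + 2)
  | 0 => rfl
  | 1 => rfl
  | (m+2) => by
      rw [FA, card_union_images, card_FA (m+1), card_FA m]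
      show Nat.fib (m+3) + Nat.fib (m+2) = Nat.fib (m+4)
      rw [Nat.add_comm]
      exact (Nat.fib_add_two).symm

lemma card_FB : ∀ m, (FB m).card = Nat.fib (m + 1)
  | 0 => rfl
  | 1 => rfl
  | (m+2) => by
      rw [FB, card_union_images, card_FB (m+1), card_FB m]
      show Nat.fib (m+2) + Nat.fib (m+1) = Nat.fib (m+3)
      rw [Nat.add_comm]
      exact (Nat.fib_add_two).symm

lemma mem_FA : ∀ m (l : List Bool), l ∈ FA m ↔ l.length = m ∧ Good l
  | 0, l => by
      simp only [FA, Finset.mem_singleton]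
      constructor
      · rintro rfl; exact ⟨rfl, good_nil⟩
      · rintro ⟨h, -⟩; exact List.length_eq_zero_iff.mp h
  | 1, l => by
      simp only [FA, Finset.mem_insert, Finset.mem_singleton]
      constructor
      · rintro (rfl | rfl) <;> exact ⟨rfl, good_singleton _⟩
      · rintro ⟨h, -⟩
        obtain ⟨b, rfl⟩ := List.length_eq_one_iff.mp h
        cases b <;> simp
  | (m+2), l => by
      simp only [FA, Finset.mem_union, Finset.mem_image]
      constructor
      · rintro (⟨t, ht, rfl⟩ | ⟨t, ht, rfl⟩)
        · obtain ⟨hlen, hg⟩ := (mem_FA (m+1) t).mp ht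
          exact ⟨by simp [hlen], (good_false_cons t).mpr hg⟩
        · obtain ⟨hlen, hg⟩ := (mem_FA m t).mp ht
          refine ⟨by simp [hlen], ?_⟩
          rw [good_true_cons, good_false_cons]
          exact ⟨by simp, hg⟩
      · rintro ⟨hlen, hg⟩
        match l with
        | [] => simp at hlen
        | [b] => simp at hlen
        | (b :: c :: rest) =>
          cases b
          · left
            refine ⟨c :: rest, (mem_FA (m+1) _).mpr ⟨by simpa using hlen, ?_⟩, rfl⟩
            exact (good_false_cons _).mp hg
          · right
            rw [good_true_cons] at hg
            obtain ⟨hc, hg⟩ := hg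
            have : c = false := hc c rfl
            subst this
            exact ⟨rest, (mem_FA m _).mpr ⟨by simpa using hlen,
              (good_false_cons _).mp hg⟩, rfl⟩

lemma mem_FB : ∀ m (l : List Bool),
    l ∈ FB m ↔ l.length = m ∧ Good l ∧ l.getLast? ≠ some true
  | 0, l => by
      simp only [FB, Finset.mem_singleton]
      constructor
      · rintro rfl; exact ⟨rfl, good_nil, by simp⟩
      · rintro ⟨h, -⟩; exact List.length_eq_zero_iff.mp h
  | 1, l => by
      simp only [FB, Finset.mem_singleton]
      constructor
      · rintro rfl; exact ⟨rfl, good_singleton _, by simp⟩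
      · rintro ⟨h, -, hlast⟩
        obtain ⟨b, rfl⟩ := List.length_eq_one_iff.mp h
        cases b
        · rfl
        · simp at hlast
  | (m+2), l => by
      simp only [FB, Finset.mem_union, Finset.mem_image]
      constructor
      · rintro (⟨t, ht, rfl⟩ | ⟨t, ht, rfl⟩)
        · obtain ⟨hlen, hg, hlast⟩ := (mem_FB (m+1) t).mp ht
          refine ⟨by simp [hlen], (good_false_cons t).mpr hg, ?_⟩
          match t, hlen with
          | (x :: ts), _ => simpa using hlast
        · obtain ⟨hlen, hg, hlast⟩ := (mem_FB m t).mp ht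
          refine ⟨by simp [hlen], ?_, ?_⟩
          · rw [good_true_cons, good_false_cons]
            exact ⟨by simp, hg⟩
          · match t with
            | [] => simp
            | (x :: ts) => simpa using hlast
      · rintro ⟨hlen, hg, hlast⟩
        match l with
        | [] => simp at hlen
        | [b] => simp at hlen
        | (b :: c :: rest) =>
          cases b
          · left
            refine ⟨c :: rest, (mem_FB (m+1) _).mpr ⟨by simpa using hlen,
              (good_false_cons _).mp hg, by simpa using hlast⟩, rfl⟩
          · right
            rw [good_true_cons] at hg
            obtain ⟨hc, hg⟩ := hg
            have : c = false := hc c rfl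
            subst this
            refine ⟨rest, (mem_FB m _).mpr ⟨by simpa using hlen,
              (good_false_cons _).mp hg, ?_⟩, rfl⟩
            match rest with
            | [] => simp
            | (x :: ts) => simpa using hlast

/-- cyclically good lists of length `m+2` -/
def FC (m : ℕ) : Finset (List Bool) :=
  ((FA (m+1)).image (List.cons false)) ∪ ((FB m).image (fun l => true :: false :: l))

lemma card_FC (m : ℕ) : (FC m).card = Nat.fib (m + 3) + Nat.fib (m + 1) := by
  rw [FC, card_union_images, card_FA, card_FB]

lemma mem_FC (m : ℕ) (l : List Bool) :
    l ∈ FC m ↔ l.length = m + 2 ∧ Good l ∧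
      ¬(l.head? = some true ∧ l.getLast? = some true) := by
  simp only [FC, Finset.mem_union, Finset.mem_image]
  constructor
  · rintro (⟨t, ht, rfl⟩ | ⟨t, ht, rfl⟩)
    · obtain ⟨hlen, hg⟩ := (mem_FA (m+1) t).mp ht
      exact ⟨by simp [hlen], (good_false_cons t).mpr hg, by simp⟩
    · obtain ⟨hlen, hg, hlast⟩ := (mem_FB m t).mp ht
      refine ⟨by simp [hlen], ?_, ?_⟩
      · rw [good_true_cons, good_false_cons]; exact ⟨by simp, hg⟩
      · rintro ⟨-, h2⟩
        match t with
        | [] => simp at h2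
        | (x :: ts) => exact hlast (by simpa using h2)
  · rintro ⟨hlen, hg, hhl⟩
    match l with
    | (b :: c :: rest) =>
      cases b
      · left
        exact ⟨c :: rest, (mem_FA (m+1) _).mpr ⟨by simpa using hlen,
          (good_false_cons _).mp hg⟩, rfl⟩
      · right
        rw [good_true_cons] at hg
        obtain ⟨hc, hg⟩ := hg
        have : c = false := hc c rfl
        subst this
        refine ⟨rest, (mem_FB m _).mpr ⟨by simpa using hlen,
          (good_false_cons _).mp hg, ?_⟩, rfl⟩
        match rest with
        | [] => simp
        | (x :: ts) =>
          intro hlast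
          exact hhl ⟨rfl, by simpa using hlast⟩

lemma nonAdjacent_iff {n : ℕ} (A : Finset (ZMod n)) :
    NonAdjacent A ↔ ∀ x : ZMod n, x ∈ A → x + 1 ∉ A := by
  constructor
  · intro h x hx; exact (h x hx).1
  · intro h x hx
    refine ⟨h x hx, fun hy => ?_⟩
    exact h _ hy (by simpa using hx)

def toL (n : ℕ) (A : Finset (ZMod n)) : List Bool :=
  List.ofFn (fun i : Fin n => decide (((i : ℕ) : ZMod n) ∈ A))

lemma length_toL (n : ℕ) (A : Finset (ZMod n)) : (toL n A).length = n := by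
  simp [toL]

lemma get_toL (n : ℕ) (A : Finset (ZMod n)) (i : ℕ) (h : i < (toL n A).length) :
    (toL n A).get ⟨i, h⟩ = decide (((i : ℕ) : ZMod n) ∈ A) := by
  simp [toL]

lemma cast_succ_eq {n : ℕ} (i : ℕ) :
    ((i : ℕ) : ZMod n) + 1 = (((i+1 : ℕ)) : ZMod n) := by push_cast; ring

lemma head?_eq_get' {α} (l : List α) (h : 0 < l.length) :
    l.head? = some (l.get ⟨0, h⟩) := by
  rw [List.head?_eq_getElem?, List.getElem?_eq_getElem h]; rfl

lemma getLast?_eq_get' {α} (l : List α) (h : 0 < l.length) :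
    l.getLast? = some (l.get ⟨l.length - 1, by omega⟩) := by
  rw [List.getLast?_eq_getElem?, List.getElem?_eq_getElem (by omega)]; rfl

lemma head?_toL (m : ℕ) (A : Finset (ZMod (m+2))) :
    (toL (m+2) A).head? = some (decide (((0:ℕ) : ZMod (m+2)) ∈ A)) := by
  simp [toL, List.head?_eq_getElem?, List.getElem?_ofFn, List.ofFnNthVal]

lemma getLast?_toL (m : ℕ) (A : Finset (ZMod (m+2))) :
    (toL (m+2) A).getLast? = some (decide ((((m+1:ℕ)) : ZMod (m+2)) ∈ A)) := by
  rw [getLast?_eq_get' _ (by rw [length_toL]; omega), Option.some_inj, get_toL]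
  have hi : (toL (m+2) A).length - 1 = m + 1 := by simp [length_toL]
  rw [hi]

lemma toL_mem_FC (m : ℕ) (A : Finset (ZMod (m+2))) (hA : NonAdjacent A) :
    toL (m+2) A ∈ FC m := by
  rw [mem_FC]
  rw [nonAdjacent_iff] at hA
  refine ⟨length_toL _ A, ?_, ?_⟩
  · rw [Good, chain'_iff_get]
    intro i hilt
    rw [get_toL, get_toL]
    rintro ⟨h1, h2⟩
    have hx : ((i:ℕ) : ZMod (m+2)) ∈ A := of_decide_eq_true h1
    have hy : (((i+1:ℕ)) : ZMod (m+2)) ∈ A := of_decide_eq_true h2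
    exact hA _ hx ((cast_succ_eq i) ▸ hy)
  · rintro ⟨hh, hl⟩
    rw [head?_toL, Option.some_inj] at hh
    rw [getLast?_toL, Option.some_inj] at hl
    have hx : (((m+1:ℕ)) : ZMod (m+2)) ∈ A := of_decide_eq_true hl
    have hy : (((0:ℕ)) : ZMod (m+2)) ∈ A := of_decide_eq_true hh
    have hcast : (((m+1:ℕ)) : ZMod (m+2)) + 1 = (((0:ℕ)) : ZMod (m+2)) := by
      rw [cast_succ_eq]
      simp [ZMod.natCast_self]
    exact hA _ hx (hcast ▸ hy)

lemma toL_surj_FC (m : ℕ) (l : List Bool) (hl : l ∈ FC m) :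
    ∃ A : Finset (ZMod (m+2)), NonAdjacent A ∧ toL (m+2) A = l := by
  obtain ⟨hlen, hg, hhl⟩ := (mem_FC m l).mp hl
  set A := Finset.univ.filter (fun x : ZMod (m+2) => l.getD x.val false = true) with hAdef
  have hget : ∀ (i:ℕ) (h : i < l.length), ((((i:ℕ)) : ZMod (m+2)) ∈ A ↔ l.get ⟨i,h⟩ = true) := by
    intro i h
    have hv : ((i : ZMod (m+2))).val = i := ZMod.val_natCast_of_lt (by omega)
    simp only [hAdef, Finset.mem_filter, Finset.mem_univ, true_and, hv]
    rw [List.getD_eq_getElem l false (by omega)]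
    simp
  have hNA : NonAdjacent A := by
    rw [nonAdjacent_iff]
    intro x hx hx1
    have hxval : ((x.val : ℕ) : ZMod (m+2)) = x := ZMod.natCast_rightInverse x
    have hklt : x.val < m + 2 := ZMod.val_lt x
    by_cases hk : x.val < m + 1
    · have e1 : ((x.val : ℕ) : ZMod (m+2)) ∈ A := by rw [hxval]; exact hx
      have e2 : (((x.val+1 : ℕ)) : ZMod (m+2)) ∈ A := by
        rw [← cast_succ_eq, hxval]; exact hx1
      have g1 := (hget x.val (by omega)).mp e1
      have g2 := (hget (x.val+1) (by omega)).mp e2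
      rw [Good, chain'_iff_get] at hg
      exact hg x.val (by omega) ⟨g1, g2⟩
    · have hk2 : x.val = m + 1 := by omega
      have hxeq : x = (((m+1:ℕ)) : ZMod (m+2)) := by rw [← hxval, hk2]
      have e1 : (((m+1 : ℕ)) : ZMod (m+2)) ∈ A := by rw [← hxeq]; exact hx
      have hcast : (((m+1:ℕ)) : ZMod (m+2)) + 1 = (((0:ℕ)) : ZMod (m+2)) := by
        rw [cast_succ_eq]; simp [ZMod.natCast_self]
      have e2 : (((0 : ℕ)) : ZMod (m+2)) ∈ A := by
        rw [← hcast, ← hxeq]; exact hx1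
      have g1 := (hget (m+1) (by omega)).mp e1
      have g2 := (hget 0 (by omega)).mp e2
      refine hhl ⟨?_, ?_⟩
      · rw [head?_eq_get' l (by omega), Option.some_inj]
        exact g2
      · rw [getLast?_eq_get' l (by omega), Option.some_inj]
        have hi : l.length - 1 = m + 1 := by omega
        convert g1 using 2
        exact Fin.ext hi
  refine ⟨A, hNA, ?_⟩
  apply List.ext_get (by rw [length_toL, hlen])
  intro i h1 h2
  rw [get_toL]
  have := hget i h2
  cases hb : l.get ⟨i, h2⟩
  · rw [hb] at this
    simp only [Bool.false_eq_true, iff_false] at this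
    exact decide_eq_false this
  · rw [hb] at this
    exact decide_eq_true (this.mpr rfl)

lemma toL_inj (n : ℕ) [NeZero n] : Function.Injective (toL n) := by
  intro A B h
  ext x
  have hx := ZMod.natCast_rightInverse (n := n) x
  have hv : x.val < (toL n A).length := by rw [length_toL]; exact ZMod.val_lt x
  have hv' : x.val < (toL n B).length := by rw [length_toL]; exact ZMod.val_lt x
  have := get_toL n A x.val hv
  have h2 := get_toL n B x.val hv'
  have h3 : (toL n A).get ⟨x.val, hv⟩ = (toL n B).get ⟨x.val, hv'⟩ :=
    List.get_of_eq h ⟨x.val, hv⟩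
  rw [this, h2] at h3
  rw [← hx]
  constructor <;> intro hm
  · have : decide (((x.val : ℕ) : ZMod n) ∈ A) = true := decide_eq_true hm
    rw [h3] at this
    exact of_decide_eq_true this
  · have : decide (((x.val : ℕ) : ZMod n) ∈ B) = true := decide_eq_true hm
    rw [← h3] at this
    exact of_decide_eq_true this

lemma numNonAdjacent_eq (m : ℕ) :
    numNonAdjacent (m+2) = Nat.fib (m+3) + Nat.fib (m+1) := by
  rw [numNonAdjacent, ← card_FC m, ← Nat.card_eq_finsetCard]
  apply Nat.card_congr
  refine Equiv.ofBijective (fun A => ⟨toL (m+2) A.1, toL_mem_FC m A.1 A.2⟩) ⟨?_, ?_⟩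
  · intro A B h
    exact Subtype.ext (toL_inj (m+2) (congrArg Subtype.val h))
  · rintro ⟨l, hl⟩
    obtain ⟨A, hNA, hAl⟩ := toL_surj_FC m l hl
    exact ⟨⟨A, hNA⟩, Subtype.ext hAl⟩

lemma fib_sum_golden (m : ℕ) :
    ((Nat.fib (m+3) + Nat.fib (m+1) : ℕ) : ℝ)
      = Real.goldenRatio^(m+2) + Real.goldenConj^(m+2) := by
  push_cast
  rw [Real.coe_fib_eq, Real.coe_fib_eq]
  have h5 : (0:ℝ) < Real.sqrt 5 := by positivity
  have hsq : Real.sqrt 5 * Real.sqrt 5 = 5 := Real.mul_self_sqrt (by norm_num)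
  have hA : Real.goldenRatio + 2 = Real.sqrt 5 * Real.goldenRatio := by
    unfold Real.goldenRatio
    linear_combination (-1/2) * hsq
  have hB : Real.goldenConj + 2 = -(Real.sqrt 5 * Real.goldenConj) := by
    unfold Real.goldenConj
    linear_combination (-1/2) * hsq
  have key : Real.goldenRatio^(m+3) - Real.goldenConj^(m+3) + (Real.goldenRatio^(m+1) - Real.goldenConj^(m+1))
      = Real.sqrt 5 * (Real.goldenRatio^(m+2) + Real.goldenConj^(m+2)) := by
    have e1 : Real.goldenRatio^(m+3) = Real.goldenRatio^(m+1) * Real.goldenRatio^2 := by ring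
    have e2 : Real.goldenConj^(m+3) = Real.goldenConj^(m+1) * Real.goldenConj^2 := by ring
    have e3 : Real.goldenRatio^(m+2) = Real.goldenRatio^(m+1) * Real.goldenRatio := by ring
    have e4 : Real.goldenConj^(m+2) = Real.goldenConj^(m+1) * Real.goldenConj := by ring
    rw [e1, e2, e3, e4, Real.goldenRatio_sq, Real.goldenConj_sq]
    linear_combination (Real.goldenRatio^(m+1)) * hA - (Real.goldenConj^(m+1)) * hB
  rw [← add_div, key]
  exact mul_div_cancel_left₀ _ (ne_of_gt h5)

end NAProof

/-- For `n ≥ 2`, the number of non-adjacent subsets of `Z/nZ` is the nearest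
integer to `φ^n`, where `φ = (1 + √5)/2`:  `|s n − φ^n| < 1/2`. -/
theorem numNonAdjacent_near_golden_pow (n : ℕ) (hn : 2 ≤ n) :
    |(numNonAdjacent n : ℝ) - ((1 + Real.sqrt 5) / 2) ^ n| < 1 / 2 := by
  obtain ⟨m, rfl⟩ : ∃ m, n = m + 2 := ⟨n - 2, by omega⟩
  rw [NAProof.numNonAdjacent_eq, NAProof.fib_sum_golden]
  rw [show ((1 + Real.sqrt 5) / 2 : ℝ) = Real.goldenRatio from rfl]
  rw [add_sub_cancel_left, abs_pow]
  have hsq : Real.sqrt 5 * Real.sqrt 5 = 5 := Real.mul_self_sqrt (by norm_num)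
  have h25 : (2:ℝ) < Real.sqrt 5 := by nlinarith [Real.sqrt_nonneg 5]
  have h1 : |Real.goldenConj| ≤ 1 :=
    abs_le.mpr ⟨Real.neg_one_lt_goldenConj.le, Real.goldenConj_neg.le.trans (by norm_num)⟩
  have h2 : |Real.goldenConj|^(m+2) ≤ |Real.goldenConj|^2 :=
    pow_le_pow_of_le_one (abs_nonneg _) h1 (by omega)
  have h3 : |Real.goldenConj|^2 < 1/2 := by
    rw [sq_abs, Real.goldenConj_sq]
    unfold Real.goldenConj
    linarith
  exact lt_of_le_of_lt h2 h3
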